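/- Let ζ̂ be a nonnegative integer-valued random variable defined on the same probability space as (ζ,V) with ℙ(ζ̂ ≤ ζ) = 1, and suppose that for all s, u ∈ ℤ₊ and A ∈ 𝒮, ℙ(ζ̂ ≤ s, 0 < ζ − ζ̂ ≤ u, V ∈ A) = ℙ(ζ̂ ≤ s, ζ̂ < ζ)·(1 − (1−γ)^u)·μ(A). Then for every t ∈ ℤ₊ with ℙ(ζ̂ ≤ t, ζ > t) > 0, the conditional distribution of (ζ − t, V) given the event {ζ̂ ≤ t, ζ > t} equals ν_γ × μ. -/
import Mathlib


open MeasureTheory ProbabilityTheory Real Set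
open scoped ENNReal

/-- The geometric distribution on `{1, 2, …}` with `ν_γ({k}) = γ(1−γ)^{k−1}`
(mean `γ⁻¹`), as a measure on `ℕ`. -/
noncomputable def geomν (γ : ℝ) : Measure ℕ :=
  MeasureTheory.Measure.count.withDensity
    (fun k => if k = 0 then 0 else ENNReal.ofReal (γ * (1 - γ) ^ (k - 1)))

private lemma geom_tsum {γ : ℝ} (hγ : 0 < γ) (hγ1 : γ ≤ 1) :
    ∑' k : ℕ, ENNReal.ofReal (γ * (1 - γ) ^ k) = 1 := by
  have h1 : ∀ k : ℕ, ENNReal.ofReal (γ * (1 - γ) ^ k)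
      = ENNReal.ofReal γ * ENNReal.ofReal (1 - γ) ^ k := fun k => by
    rw [ENNReal.ofReal_mul hγ.le, ENNReal.ofReal_pow (by linarith)]
  simp_rw [h1]
  rw [ENNReal.tsum_mul_left, ENNReal.tsum_geometric]
  have h2 : (1 : ℝ≥0∞) - ENNReal.ofReal (1 - γ) = ENNReal.ofReal γ := by
    rw [← ENNReal.ofReal_one, ← ENNReal.ofReal_sub _ (by linarith : (0:ℝ) ≤ 1 - γ)]
    norm_num
  rw [h2, ENNReal.mul_inv_cancel (ENNReal.ofReal_pos.mpr hγ).ne' ENNReal.ofReal_ne_top]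

private lemma geom_apply (γ : ℝ) (s : Set ℕ) :
    geomν γ s = ∑' k : s,
      (if (k : ℕ) = 0 then 0 else ENNReal.ofReal (γ * (1 - γ) ^ ((k : ℕ) - 1))) := by
  rw [geomν, withDensity_apply _ s.to_countable.measurableSet,
    lintegral_countable _ s.to_countable]
  simp [Measure.count_singleton]

private lemma geom_prob {γ : ℝ} (hγ : 0 < γ) (hγ1 : γ ≤ 1) :
    IsProbabilityMeasure (geomν γ) := by
  constructor
  rw [geom_apply, tsum_univ (fun k : ℕ =>
    (if (k : ℕ) = 0 then 0 else ENNReal.ofReal (γ * (1 - γ) ^ ((k : ℕ) - 1))))]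
  rw [tsum_eq_zero_add' ENNReal.summable]
  simp only [if_pos rfl, zero_add, Nat.succ_ne_zero, if_false, Nat.add_sub_cancel, if_true]
  exact geom_tsum hγ hγ1

/-- Theorem 3.5 (lattice converse part): if `ℙ(ζ̂ ≤ ζ) = 1` and
`ℙ(ζ̂ ≤ s, 0 < ζ − ζ̂ ≤ u, V ∈ A) = ℙ(ζ̂ ≤ s, ζ̂ < ζ)(1 − (1−γ)^u)μ(A)` for all `s, u, A`,
then for every `t ∈ ℤ₊` with `ℙ(ζ̂ ≤ t, ζ > t) > 0` the conditional law of `(ζ − t, V)`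
given `{ζ̂ ≤ t, ζ > t}` is `ν_γ × μ`. -/
theorem stmt_16 {Ω : Type*} [MeasurableSpace Ω] (P : Measure Ω) [IsProbabilityMeasure P]
    {S : Type*} [MeasurableSpace S] (μ : Measure S) [IsProbabilityMeasure μ]
    (γ : ℝ) (hγ : 0 < γ) (hγ1 : γ ≤ 1)
    (ζ : Ω → ℕ) (V : Ω → S) (hζm : Measurable ζ) (hVm : Measurable V)
    (ζhat : Ω → ℕ) (hζhatm : Measurable ζhat)
    (hle : P {ω | ζhat ω ≤ ζ ω} = 1)
    (hfact : ∀ s u : ℕ, ∀ A : Set S, MeasurableSet A →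
      P {ω | ζhat ω ≤ s ∧ ζhat ω < ζ ω ∧ ζ ω - ζhat ω ≤ u ∧ V ω ∈ A} =
        P {ω | ζhat ω ≤ s ∧ ζhat ω < ζ ω} *
          (ENNReal.ofReal (1 - (1 - γ) ^ u) * μ A)) :
    ∀ t : ℕ, 0 < P {ω | ζhat ω ≤ t ∧ t < ζ ω} →
      Measure.map (fun ω => (ζ ω - t, V ω)) (P[|{ω | ζhat ω ≤ t ∧ t < ζ ω}]) =
        (geomν γ).prod μ := by
  have hγ0 : (0:ℝ) ≤ γ := hγ.le
  have hr0 : (0:ℝ) ≤ 1 - γ := by linarith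
  have hr1 : (1:ℝ) - γ ≤ 1 := by linarith
  haveI : IsProbabilityMeasure (geomν γ) := geom_prob hγ hγ1
  intro t ht
  have hpairm : Measurable (fun ω => (ζhat ω, ζ ω)) := hζhatm.prodMk hζm
  have hmaster : ∀ (u : Set Ω) (T : Set (ℕ × ℕ)) (A : Set S), MeasurableSet A →
      (∀ ω, ω ∈ u ↔ ((ζhat ω, ζ ω) ∈ T ∧ V ω ∈ A)) → MeasurableSet u := by
    intro u T A hA hiff
    have h : u = (fun ω => (ζhat ω, ζ ω)) ⁻¹' T ∩ V ⁻¹' A := Set.ext hiff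
    rw [h]
    exact (hpairm (Set.to_countable T).measurableSet).inter (hVm hA)
  -- Step 1 : exact value of ζ - ζhat
  have step1 : ∀ (s v : ℕ) (A : Set S), MeasurableSet A →
      P {ω | ζhat ω ≤ s ∧ ζhat ω < ζ ω ∧ ζ ω - ζhat ω = v + 1 ∧ V ω ∈ A} =
        P {ω | ζhat ω ≤ s ∧ ζhat ω < ζ ω} *
          (ENNReal.ofReal (γ * (1 - γ) ^ v) * μ A) := by
    intro s v A hA
    have hsub : {ω | ζhat ω ≤ s ∧ ζhat ω < ζ ω ∧ ζ ω - ζhat ω ≤ v ∧ V ω ∈ A} ⊆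
        {ω | ζhat ω ≤ s ∧ ζhat ω < ζ ω ∧ ζ ω - ζhat ω ≤ v + 1 ∧ V ω ∈ A} := by
      rintro ω ⟨h1, h2, h3, h4⟩
      exact ⟨h1, h2, h3.trans (Nat.le_succ v), h4⟩
    have hset : {ω | ζhat ω ≤ s ∧ ζhat ω < ζ ω ∧ ζ ω - ζhat ω = v + 1 ∧ V ω ∈ A} =
        {ω | ζhat ω ≤ s ∧ ζhat ω < ζ ω ∧ ζ ω - ζhat ω ≤ v + 1 ∧ V ω ∈ A} \
          {ω | ζhat ω ≤ s ∧ ζhat ω < ζ ω ∧ ζ ω - ζhat ω ≤ v ∧ V ω ∈ A} := by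
      ext ω
      simp only [mem_setOf_eq, mem_diff]
      constructor
      · rintro ⟨h1, h2, h3, h4⟩
        exact ⟨⟨h1, h2, by omega, h4⟩, fun h => by omega⟩
      · rintro ⟨⟨h1, h2, h3, h4⟩, h5⟩
        have h6 : ¬ (ζ ω - ζhat ω ≤ v) := fun hv => h5 ⟨h1, h2, hv, h4⟩
        exact ⟨h1, h2, by omega, h4⟩
    have hm2 : MeasurableSet {ω | ζhat ω ≤ s ∧ ζhat ω < ζ ω ∧ ζ ω - ζhat ω ≤ v ∧ V ω ∈ A} :=
      hmaster _ {x : ℕ × ℕ | x.1 ≤ s ∧ x.1 < x.2 ∧ x.2 - x.1 ≤ v} A hA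
        (fun ω => by simp only [mem_setOf_eq]; tauto)
    rw [hset, measure_diff hsub hm2.nullMeasurableSet (measure_ne_top P _),
      hfact s (v + 1) A hA, hfact s v A hA]
    have hofr : ENNReal.ofReal (1 - (1 - γ) ^ (v + 1))
        = ENNReal.ofReal (γ * (1 - γ) ^ v) + ENNReal.ofReal (1 - (1 - γ) ^ v) := by
      rw [← ENNReal.ofReal_add (by positivity)
        (by nlinarith [pow_le_one₀ hr0 hr1 (n := v)] : (0:ℝ) ≤ 1 - (1 - γ) ^ v)]
      congr 1
      ring
    have hne : P {ω | ζhat ω ≤ s ∧ ζhat ω < ζ ω} *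
        (ENNReal.ofReal (1 - (1 - γ) ^ v) * μ A) ≠ ∞ :=
      ENNReal.mul_ne_top (measure_ne_top P _)
        (ENNReal.mul_ne_top ENNReal.ofReal_ne_top (measure_ne_top μ A))
    rw [hofr, add_mul, mul_add, ENNReal.add_sub_cancel_right hne]
  -- coefficients
  set aCoef : ℕ → ℝ≥0∞ := fun j =>
    if j = 0 then P {ω | ζhat ω ≤ 0 ∧ ζhat ω < ζ ω}
    else P {ω | ζhat ω ≤ j ∧ ζhat ω < ζ ω} - P {ω | ζhat ω ≤ j - 1 ∧ ζhat ω < ζ ω}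
    with haC
  -- Step 2 : exact value of ζhat
  have step2 : ∀ (j v : ℕ) (A : Set S), MeasurableSet A →
      P {ω | ζhat ω = j ∧ ζhat ω < ζ ω ∧ ζ ω - ζhat ω = v + 1 ∧ V ω ∈ A} =
        aCoef j * (ENNReal.ofReal (γ * (1 - γ) ^ v) * μ A) := by
    intro j v A hA
    rcases j with _ | n
    · have hset : {ω | ζhat ω = 0 ∧ ζhat ω < ζ ω ∧ ζ ω - ζhat ω = v + 1 ∧ V ω ∈ A} =
          {ω | ζhat ω ≤ 0 ∧ ζhat ω < ζ ω ∧ ζ ω - ζhat ω = v + 1 ∧ V ω ∈ A} := by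
        ext ω; simp [Nat.le_zero]
      rw [hset, step1 0 v A hA, haC]
      simp
    · have hsub : {ω | ζhat ω ≤ n ∧ ζhat ω < ζ ω ∧ ζ ω - ζhat ω = v + 1 ∧ V ω ∈ A} ⊆
          {ω | ζhat ω ≤ n + 1 ∧ ζhat ω < ζ ω ∧ ζ ω - ζhat ω = v + 1 ∧ V ω ∈ A} := by
        rintro ω ⟨h1, h2⟩
        exact ⟨h1.trans (Nat.le_succ n), h2⟩
      have hset : {ω | ζhat ω = n + 1 ∧ ζhat ω < ζ ω ∧ ζ ω - ζhat ω = v + 1 ∧ V ω ∈ A} =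
          {ω | ζhat ω ≤ n + 1 ∧ ζhat ω < ζ ω ∧ ζ ω - ζhat ω = v + 1 ∧ V ω ∈ A} \
            {ω | ζhat ω ≤ n ∧ ζhat ω < ζ ω ∧ ζ ω - ζhat ω = v + 1 ∧ V ω ∈ A} := by
        ext ω
        simp only [mem_setOf_eq, mem_diff]
        constructor
        · rintro ⟨h1, h2⟩
          exact ⟨⟨by omega, h2⟩, fun h => by omega⟩
        · rintro ⟨⟨h1, h2⟩, h5⟩
          have h6 : ¬ (ζhat ω ≤ n) := fun hn => h5 ⟨hn, h2⟩
          exact ⟨by omega, h2⟩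
      have hm2 : MeasurableSet
          {ω | ζhat ω ≤ n ∧ ζhat ω < ζ ω ∧ ζ ω - ζhat ω = v + 1 ∧ V ω ∈ A} :=
        hmaster _ {x : ℕ × ℕ | x.1 ≤ n ∧ x.1 < x.2 ∧ x.2 - x.1 = v + 1} A hA
          (fun ω => by simp only [mem_setOf_eq]; tauto)
      rw [hset, measure_diff hsub hm2.nullMeasurableSet (measure_ne_top P _),
        step1 (n + 1) v A hA, step1 n v A hA, haC]
      simp only [Nat.succ_ne_zero, if_false, Nat.add_sub_cancel]
      rw [ENNReal.sub_mul (fun _ _ =>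
        ENNReal.mul_ne_top ENNReal.ofReal_ne_top (measure_ne_top μ A))]
  -- the constant c
  set c : ℝ≥0∞ := ∑ j ∈ Finset.range (t + 1), aCoef j * ENNReal.ofReal ((1 - γ) ^ (t - j))
    with hcdef
  -- key computation
  have key : ∀ (m : ℕ) (A : Set S), MeasurableSet A →
      P {ω | (ζhat ω ≤ t ∧ t < ζ ω) ∧ ζ ω - t = m + 1 ∧ V ω ∈ A} =
        c * (ENNReal.ofReal (γ * (1 - γ) ^ m) * μ A) := by
    intro m A hA
    have hun : {ω | (ζhat ω ≤ t ∧ t < ζ ω) ∧ ζ ω - t = m + 1 ∧ V ω ∈ A} =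
        ⋃ j ∈ Finset.range (t + 1),
          {ω | ζhat ω = j ∧ ζhat ω < ζ ω ∧ ζ ω - ζhat ω = t - j + m + 1 ∧ V ω ∈ A} := by
      ext ω
      simp only [mem_setOf_eq, mem_iUnion, Finset.mem_range, exists_prop]
      constructor
      · rintro ⟨⟨h1, h2⟩, h3, h4⟩
        exact ⟨ζhat ω, by omega, rfl, by omega, by omega, h4⟩
      · rintro ⟨j, hj, hje, hlt, heq, h4⟩
        exact ⟨⟨by omega, by omega⟩, by omega, h4⟩
    have hdisj : (↑(Finset.range (t + 1)) : Set ℕ).PairwiseDisjoint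
        (fun j => {ω | ζhat ω = j ∧ ζhat ω < ζ ω ∧ ζ ω - ζhat ω = t - j + m + 1 ∧ V ω ∈ A}) := by
      intro i _ j _ hij
      refine Set.disjoint_left.mpr ?_
      rintro ω ⟨hi, -⟩ ⟨hj, -⟩
      exact hij (by omega)
    have hmj : ∀ j ∈ Finset.range (t + 1), MeasurableSet
        {ω | ζhat ω = j ∧ ζhat ω < ζ ω ∧ ζ ω - ζhat ω = t - j + m + 1 ∧ V ω ∈ A} := by
      intro j _
      exact hmaster _ {x : ℕ × ℕ | x.1 = j ∧ x.1 < x.2 ∧ x.2 - x.1 = t - j + m + 1} A hA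
        (fun ω => by simp only [mem_setOf_eq]; tauto)
    rw [hun, measure_biUnion_finset hdisj hmj]
    have hterm : ∀ j ∈ Finset.range (t + 1),
        P {ω | ζhat ω = j ∧ ζhat ω < ζ ω ∧ ζ ω - ζhat ω = t - j + m + 1 ∧ V ω ∈ A} =
          (aCoef j * ENNReal.ofReal ((1 - γ) ^ (t - j))) *
            (ENNReal.ofReal (γ * (1 - γ) ^ m) * μ A) := by
      intro j _
      rw [step2 j (t - j + m) A hA]
      have hsplit : ENNReal.ofReal (γ * (1 - γ) ^ (t - j + m)) =
          ENNReal.ofReal ((1 - γ) ^ (t - j)) * ENNReal.ofReal (γ * (1 - γ) ^ m) := by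
        rw [← ENNReal.ofReal_mul (by positivity)]
        congr 1
        rw [pow_add]
        ring
      rw [hsplit]
      ring
    rw [Finset.sum_congr rfl hterm, ← Finset.sum_mul, ← hcdef]
  -- P(E) = c
  have hPE : P {ω | ζhat ω ≤ t ∧ t < ζ ω} = c := by
    have hEeq : {ω | ζhat ω ≤ t ∧ t < ζ ω} =
        ⋃ m : ℕ, {ω | (ζhat ω ≤ t ∧ t < ζ ω) ∧ ζ ω - t = m + 1 ∧ V ω ∈ (univ : Set S)} := by
      ext ω
      simp only [mem_setOf_eq, mem_iUnion, mem_univ, and_true]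
      constructor
      · rintro ⟨h1, h2⟩
        exact ⟨ζ ω - t - 1, ⟨h1, h2⟩, by omega⟩
      · rintro ⟨m, h, -⟩
        exact h
    have hdisj : Pairwise (Function.onFun Disjoint
        (fun m : ℕ => {ω | (ζhat ω ≤ t ∧ t < ζ ω) ∧ ζ ω - t = m + 1 ∧ V ω ∈ (univ : Set S)})) := by
      intro i j hij
      refine Set.disjoint_left.mpr ?_
      rintro ω ⟨-, hi, -⟩ ⟨-, hj, -⟩
      exact hij (by omega)
    have hmm : ∀ m : ℕ, MeasurableSet
        {ω | (ζhat ω ≤ t ∧ t < ζ ω) ∧ ζ ω - t = m + 1 ∧ V ω ∈ (univ : Set S)} := by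
      intro m
      exact hmaster _ {x : ℕ × ℕ | (x.1 ≤ t ∧ t < x.2) ∧ x.2 - t = m + 1} univ MeasurableSet.univ
        (fun ω => by simp)
    rw [hEeq, measure_iUnion hdisj hmm]
    rw [tsum_congr (fun m => key m univ MeasurableSet.univ)]
    simp only [measure_univ, mul_one]
    rw [ENNReal.tsum_mul_left, geom_tsum hγ hγ1, mul_one]
  have hc0 : c ≠ 0 := by rw [← hPE]; exact ht.ne'
  have hctop : c ≠ ∞ := by rw [← hPE]; exact measure_ne_top P _
  have hEm : MeasurableSet {ω | ζhat ω ≤ t ∧ t < ζ ω} :=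
    hpairm ((Set.to_countable {x : ℕ × ℕ | x.1 ≤ t ∧ t < x.2}).measurableSet)
  have hgm : Measurable (fun ω => (ζ ω - t, V ω)) := by
    exact ((measurable_from_top (f := fun n : ℕ => n - t)).comp hζm).prodMk hVm
  -- rectangles
  refine (Measure.prod_eq ?_).symm
  intro s A hs hA
  rw [Measure.map_apply hgm (hs.prod hA), cond_apply hEm]
  have hterm : ∀ k : ℕ,
      P {ω | (ζhat ω ≤ t ∧ t < ζ ω) ∧ ζ ω - t = k ∧ V ω ∈ A} =
        (if k = 0 then 0 else ENNReal.ofReal (γ * (1 - γ) ^ (k - 1))) * (c * μ A) := by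
    intro k
    rcases k with _ | m
    · have : {ω | (ζhat ω ≤ t ∧ t < ζ ω) ∧ ζ ω - t = 0 ∧ V ω ∈ A} = (∅ : Set Ω) := by
        ext ω
        simp only [mem_setOf_eq, mem_empty_iff_false, iff_false]
        rintro ⟨⟨h1, h2⟩, h3, -⟩
        omega
      rw [this, measure_empty, if_pos rfl, zero_mul]
    · rw [key m A hA, if_neg (Nat.succ_ne_zero m), Nat.add_sub_cancel]
      ring
  have hsplit : {ω | ζhat ω ≤ t ∧ t < ζ ω} ∩
      (fun ω => (ζ ω - t, V ω)) ⁻¹' (s ×ˢ A) =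
      ⋃ k : s, {ω | (ζhat ω ≤ t ∧ t < ζ ω) ∧ ζ ω - t = (k : ℕ) ∧ V ω ∈ A} := by
    ext ω
    simp only [mem_inter_iff, mem_preimage, mem_prod, mem_setOf_eq, mem_iUnion]
    constructor
    · rintro ⟨hE, hks, hVA⟩
      exact ⟨⟨ζ ω - t, hks⟩, hE, rfl, hVA⟩
    · rintro ⟨⟨k, hk⟩, hE, hkeq, hVA⟩
      refine ⟨hE, ?_, hVA⟩
      simpa [hkeq] using hk
  have hdisj : Pairwise (Function.onFun Disjoint
      (fun k : s => {ω | (ζhat ω ≤ t ∧ t < ζ ω) ∧ ζ ω - t = (k : ℕ) ∧ V ω ∈ A})) := by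
    intro i j hij
    refine Set.disjoint_left.mpr ?_
    rintro ω ⟨-, hi, -⟩ ⟨-, hj, -⟩
    exact hij (Subtype.ext (by omega))
  have hmm : ∀ k : s, MeasurableSet
      {ω | (ζhat ω ≤ t ∧ t < ζ ω) ∧ ζ ω - t = (k : ℕ) ∧ V ω ∈ A} := by
    intro k
    exact hmaster _ {x : ℕ × ℕ | (x.1 ≤ t ∧ t < x.2) ∧ x.2 - t = (k : ℕ)} A hA
      (fun ω => by simp only [mem_setOf_eq]; tauto)
  rw [hsplit, measure_iUnion hdisj hmm,
    tsum_congr (fun k : s => hterm (k : ℕ)), ENNReal.tsum_mul_right, ← geom_apply, hPE]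
  rw [show c⁻¹ * (geomν γ s * (c * μ A)) = (c⁻¹ * c) * (geomν γ s * μ A) by ring,
    ENNReal.inv_mul_cancel hc0 hctop, one_mul]
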